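/- Let a, b, c, d, e, f ∈ ℂ with b + c ≠ 0, e + f ≠ 0, b·e + c·f ≠ 0, and suppose c = 0 or f = 0. Define the 'sum' coefficients F = ae + af + bd + cd, G = be + cf, H = bf + ce (these arise from adding tangles with bracket coefficients (a,b,c) and (d,e,f) at A = √i, where the loop value -A²-A⁻² vanishes). Then i·(F + H)/(G + H) = i·(a + c)/(b + c) + i·(d + f)/(e + f). That is, conductance is additive under horizontal tangle addition when one tangle has vanishing virtual coefficient. -/

import Mathlib

open Complex in
/-- Additivity of the conductance under horizontal tangle addition, when one tangle
has vanishing virtual coefficient. -/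
theorem conductance_additive (a b c d e f : ℂ)
    (h1 : b + c ≠ 0) (h2 : e + f ≠ 0) (h3 : b * e + c * f ≠ 0)
    (h4 : c = 0 ∨ f = 0)
    (F G H : ℂ)
    (hF : F = a * e + a * f + b * d + c * d)
    (hG : G = b * e + c * f)
    (hH : H = b * f + c * e) :
    I * (F + H) / (G + H) = I * (a + c) / (b + c) + I * (d + f) / (e + f) := by
  have hGH : G + H ≠ 0 := by
    rw [hG, hH]
    have : b * e + c * f + (b * f + c * e) = (b + c) * (e + f) := by ring
    rw [this]
    exact mul_ne_zero h1 h2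
  subst hF hG hH
  rw [div_add_div _ _ h1 h2, div_eq_div_iff hGH (mul_ne_zero h1 h2)]
  rcases h4 with rfl | rfl <;> ring
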